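/- For c ≠ d, c, d > 0, μ > ν > 0, the function N(t) = N₀ t^(μ−ν−1)/(c^ν − d^ν) · [E_{ν,μ−ν}(−d^ν t^ν) − E_{ν,μ−ν}(−c^ν t^ν)] solves the fractional integral equation N(t) − N₀ t^(μ−1) E_{ν,μ}(−d^ν t^ν) = −c^ν (₀D_t^(−ν) N)(t) for t > 0. -/

import Mathlib

open MeasureTheory Real Set intervalIntegral Filter


lemma aux_pow_le_gamma {β ν : ℝ} (hβ : 0 < β) (hν : 0 < ν) {y : ℝ} (hy : 1 ≤ y) :
    ∀ᶠ k : ℕ in atTop, y ^ k ≤ Real.Gamma (β + k * ν) := by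
  set p : ℕ := ⌈ν⁻¹⌉₊ with hp
  have hpν : ν⁻¹ ≤ p := Nat.le_ceil _
  have hp1 : 1 ≤ p := Nat.ceil_pos.mpr (by positivity)
  set Y : ℝ := y ^ p with hY
  have hY1 : 1 ≤ Y := one_le_pow₀ hy
  have hY0 : 0 < Y := lt_of_lt_of_le one_pos hY1
  have h2 : ∀ᶠ n : ℕ in atTop, Y ^ (n + 2) ≤ (Nat.factorial n : ℝ) := by
    have := FloorSemiring.tendsto_pow_div_factorial_atTop (K := ℝ) Y
    have h3 := this.eventually (eventually_le_nhds (show (0:ℝ) < (Y^2)⁻¹ by positivity))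
    filter_upwards [h3] with n hn
    have hfac : (0:ℝ) < (Nat.factorial n : ℝ) := by positivity
    rw [div_le_iff₀ hfac] at hn
    have : Y ^ (n+2) = Y ^ n * Y ^ 2 := by ring
    rw [this]
    calc Y ^ n * Y ^ 2 ≤ (Y^2)⁻¹ * (Nat.factorial n : ℝ) * Y^2 :=
        mul_le_mul_of_nonneg_right hn (by positivity)
    _ = (Nat.factorial n : ℝ) := by field_simp
  obtain ⟨M, hM⟩ := eventually_atTop.1 h2
  obtain ⟨K, hK⟩ := exists_nat_ge ((M + 3 - β) / ν)
  rw [eventually_atTop]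
  refine ⟨K, fun k hk => ?_⟩
  have hkν : (M + 3 : ℝ) ≤ β + k * ν := by
    rw [div_le_iff₀ hν] at hK
    have : (K : ℝ) * ν ≤ k * ν :=
      mul_le_mul_of_nonneg_right (by exact_mod_cast hk) hν.le
    linarith
  set n : ℕ := ⌊β + k * ν⌋₊ with hn
  have hx0 : (0:ℝ) ≤ β + k * ν := by positivity
  have hfl : (n : ℝ) ≤ β + k * ν := Nat.floor_le hx0
  have hfl2 : β + k * ν < n + 1 := Nat.lt_floor_add_one _
  have hnM : (M : ℝ) + 2 ≤ n := by linarith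
  have hnM' : M + 2 ≤ n := by exact_mod_cast hnM
  have hn2 : (2:ℝ) ≤ n := by
    have : (0:ℝ) ≤ (M:ℝ) := Nat.cast_nonneg _
    linarith
  have hmono : Real.Gamma n ≤ Real.Gamma (β + k * ν) := by
    rcases eq_or_lt_of_le hfl with h | h
    · rw [h]
    · exact le_of_lt (Real.Gamma_strictMonoOn_Ici (by exact hn2)
        (by simp only [mem_Ici]; linarith) h)
  have hgn : Real.Gamma n = ((Nat.factorial (n-1)) : ℝ) := by
    have h1 : (n : ℝ) = ((n - 1 : ℕ) : ℝ) + 1 := by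
      have h0 : 0 < n := by omega
      have : n - 1 + 1 = n := Nat.succ_pred_eq_of_pos h0
      exact_mod_cast (congrArg (Nat.cast (R := ℝ)) this).symm
    rw [h1, Real.Gamma_nat_eq_factorial]
  -- k ≤ (n - 1 + 2) * p
  have hkn : k ≤ (n + 1) * p := by
    have h1 : (k : ℝ) * ν < n + 1 := by linarith
    have hkr : (k : ℝ) ≤ ((n + 1) * p : ℕ) := by
      push_cast
      calc (k:ℝ) = (k * ν) * ν⁻¹ := by field_simp
      _ ≤ (k * ν) * p := mul_le_mul_of_nonneg_left hpν (by positivity)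
      _ ≤ ((n:ℝ)+1) * p := by
          apply mul_le_mul_of_nonneg_right h1.le
          exact_mod_cast Nat.zero_le p
    exact_mod_cast hkr
  have hyY : y ^ k ≤ Y ^ (n + 1) := by
    calc y ^ k ≤ y ^ ((n+1)*p) := pow_le_pow_right₀ hy hkn
    _ = Y ^ (n+1) := by rw [hY, ← pow_mul, mul_comm]
  have hfin : Y ^ (n+1) ≤ ((Nat.factorial (n-1)) : ℝ) := by
    have := hM (n-1) (by omega)
    have heq : n - 1 + 2 = n + 1 := by omega
    rwa [heq] at this
  calc y ^ k ≤ Y ^ (n+1) := hyY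
  _ ≤ ((Nat.factorial (n-1)) : ℝ) := hfin
  _ = Real.Gamma n := hgn.symm
  _ ≤ _ := hmono

lemma aux_gamma_pos {β ν : ℝ} (hβ : 0 < β) (hν : 0 ≤ ν) (k : ℕ) :
    0 < Real.Gamma (β + k * ν) :=
  Real.Gamma_pos_of_pos (by positivity)

lemma aux_summable_abs {β ν : ℝ} (hβ : 0 < β) (hν : 0 < ν) (x : ℝ) :
    Summable (fun k : ℕ => |x| ^ k / Real.Gamma (β + k * ν)) := by
  set y : ℝ := max (2 * |x|) 1 with hy
  have hy1 : 1 ≤ y := le_max_right _ _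
  have hy2 : 2 * |x| ≤ y := le_max_left _ _
  have hev := aux_pow_le_gamma hβ hν hy1
  apply Summable.of_norm_bounded_eventually_nat (g := fun k => (1/2 : ℝ) ^ k)
    (summable_geometric_of_lt_one (by norm_num) (by norm_num))
  filter_upwards [hev] with k hk
  have hG := aux_gamma_pos hβ hν.le k
  rw [Real.norm_of_nonneg (by positivity)]
  rw [div_le_iff₀ hG]
  calc |x| ^ k = (1/2 : ℝ)^k * (2 * |x|)^k := by
        rw [mul_pow, div_pow, one_pow]; field_simp
  _ ≤ (1/2:ℝ)^k * y ^ k := by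
        apply mul_le_mul_of_nonneg_left (pow_le_pow_left₀ (by positivity) hy2 k) (by positivity)
  _ ≤ (1/2:ℝ)^k * Real.Gamma (β + k * ν) := by
        apply mul_le_mul_of_nonneg_left hk (by positivity)

lemma aux_summable {β ν : ℝ} (hβ : 0 < β) (hν : 0 < ν) (x : ℝ) :
    Summable (fun k : ℕ => x ^ k / Real.Gamma (β + k * ν)) := by
  apply Summable.of_norm
  have := aux_summable_abs hβ hν x
  convert this using 2 with k
  have hG := aux_gamma_pos hβ hν.le k
  rw [norm_div, norm_pow, Real.norm_of_nonneg hG.le, Real.norm_eq_abs]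

-- integrability of u^(σ-1)(t-u)^(ν-1) on [0,t] ; first half-lemma
lemma aux_half {σ ν t : ℝ} (hσ : 0 < σ) (hν : 0 < ν) (ht : 0 < t) :
    IntervalIntegrable (fun u : ℝ => u ^ (σ-1) * (t-u) ^ (ν-1)) volume 0 (t/2) := by
  apply IntervalIntegrable.mul_continuousOn
  · exact intervalIntegrable_rpow' (by linarith)
  · apply continuousOn_of_forall_continuousAt
    intro x hx
    rw [uIcc_of_le (by positivity : (0:ℝ) ≤ t/2)] at hx
    have hxt : t - x ≠ 0 := by
      have h1 : x < t := lt_of_le_of_lt hx.2 (by linarith)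
      exact (sub_pos.mpr h1).ne'
    exact (continuous_const.sub continuous_id).continuousAt.rpow_const (Or.inl hxt)

lemma aux_intable {σ ν t : ℝ} (hσ : 0 < σ) (hν : 0 < ν) (ht : 0 < t) :
    IntervalIntegrable (fun u : ℝ => u ^ (σ-1) * (t-u) ^ (ν-1)) volume 0 t := by
  apply (aux_half hσ hν ht).trans
  have h1 : IntervalIntegrable (fun u : ℝ => u ^ (ν-1) * (t-u) ^ (σ-1)) volume 0 (t/2) :=
    aux_half hν hσ ht
  have h2 := h1.comp_sub_left t
  have e1 : t - 0 = t := by ring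
  have e2 : t - t/2 = t/2 := by ring
  rw [e1, e2] at h2
  have hfe : (fun u : ℝ => u ^ (σ-1) * (t-u) ^ (ν-1))
      = (fun x : ℝ => (t-x) ^ (ν-1) * (t-(t-x)) ^ (σ-1)) := by
    funext u
    rw [show t - (t-u) = u from by ring]
    ring
  rw [hfe]
  exact h2.symm

lemma aux_beta {σ ν t : ℝ} (hσ : 0 < σ) (hν : 0 < ν) (ht : 0 < t) :
    ∫ u in (0:ℝ)..t, u ^ (σ-1) * (t-u) ^ (ν-1)
      = Real.Gamma σ * Real.Gamma ν / Real.Gamma (σ+ν) * t ^ (σ+ν-1) := by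
  have hsc := Complex.betaIntegral_scaled (σ:ℂ) (ν:ℂ) ht
  have hG := Complex.Gamma_mul_Gamma_eq_betaIntegral
    (by simpa using hσ : 0 < (σ:ℂ).re) (by simpa using hν : 0 < (ν:ℂ).re)
  have hGne : Complex.Gamma ((σ:ℂ)+(ν:ℂ)) ≠ 0 := by
    rw [← Complex.ofReal_add, Complex.Gamma_ofReal]
    exact_mod_cast (Real.Gamma_pos_of_pos (by linarith)).ne'
  have hB : Complex.betaIntegral σ ν
      = Complex.Gamma σ * Complex.Gamma ν / Complex.Gamma (σ+ν) := by
    field_simp [hG]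
    rw [hG]; ring
  -- convert the complex interval integral to ofReal of the real one
  have hcong : ∀ x ∈ uIcc (0:ℝ) t,
      ((fun u : ℝ => ((u ^ (σ-1) * (t-u) ^ (ν-1) : ℝ) : ℂ)) x)
        = (x : ℂ) ^ ((σ:ℂ) - 1) * ((t:ℂ) - x) ^ ((ν:ℂ) - 1) := by
    intro x hx
    rw [uIcc_of_le ht.le] at hx
    simp only []
    rw [Complex.ofReal_mul, Complex.ofReal_cpow hx.1,
      Complex.ofReal_cpow (by linarith [hx.2] : (0:ℝ) ≤ t - x)]
    push_cast; ring
  have h3 : ((∫ u in (0:ℝ)..t, u ^ (σ-1) * (t-u) ^ (ν-1) : ℝ) : ℂ)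
      = (t:ℂ) ^ ((σ:ℂ)+(ν:ℂ)-1) * Complex.betaIntegral σ ν := by
    rw [← hsc, ← intervalIntegral.integral_ofReal]
    exact intervalIntegral.integral_congr hcong
  rw [hB] at h3
  have h4 : ((t:ℂ) ^ ((σ:ℂ)+(ν:ℂ)-1)) = ((t ^ (σ+ν-1) : ℝ) : ℂ) := by
    rw [Complex.ofReal_cpow ht.le]; push_cast; ring_nf
  rw [h4, ← Complex.ofReal_add, Complex.Gamma_ofReal, Complex.Gamma_ofReal,
    Complex.Gamma_ofReal] at h3
  have := h3
  rw [show ((t ^ (σ+ν-1) : ℝ):ℂ) * ((Real.Gamma σ : ℂ) * (Real.Gamma ν:ℂ) / (Real.Gamma (σ+ν):ℂ))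
      = (((t ^ (σ+ν-1) * (Real.Gamma σ * Real.Gamma ν / Real.Gamma (σ+ν))) : ℝ) : ℂ) by
    push_cast; ring] at this
  have := Complex.ofReal_inj.mp this
  rw [this]; ring

lemma aux_gamma_pos' {β ν : ℝ} (hβ : 0 < β) (hν : 0 ≤ ν) (k : ℕ) :
    0 < Real.Gamma (β + k * ν) :=
  Real.Gamma_pos_of_pos (by positivity)

lemma aux_shift {μ ν : ℝ} (hν : 0 < ν) (hβ : 0 < μ - ν) (x : ℝ) :
    (∑' k : ℕ, x ^ k / Real.Gamma ((μ - ν) + k * ν))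
      = 1 / Real.Gamma (μ - ν) + x * ∑' k : ℕ, x ^ k / Real.Gamma (μ + k * ν) := by
  rw [Summable.tsum_eq_zero_add (aux_summable hβ hν x)]
  congr 1
  · norm_num
  · rw [← tsum_mul_left]
    apply tsum_congr
    intro j
    have h1 : (μ - ν) + (j+1 : ℕ) * ν = μ + j * ν := by push_cast; ring
    rw [h1, pow_succ]
    ring

theorem two_rate_solves_fractional_integral_equation
    (c d μ ν N₀ : ℝ) (hc : 0 < c) (hd : 0 < d) (hcd : c ≠ d) (hν : 0 < ν) (hμν : ν < μ)
    (N : ℝ → ℝ)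
    (hN : ∀ t : ℝ, 0 < t →
      N t = N₀ * t ^ (μ - ν - 1) / (c ^ ν - d ^ ν) *
        ((∑' k : ℕ, (-(d ^ ν * t ^ ν)) ^ k / Real.Gamma ((μ - ν) + k * ν))
          - ∑' k : ℕ, (-(c ^ ν * t ^ ν)) ^ k / Real.Gamma ((μ - ν) + k * ν))) :
    ∀ t : ℝ, 0 < t →
      N t - N₀ * t ^ (μ - 1) * (∑' k : ℕ, (-(d ^ ν * t ^ ν)) ^ k / Real.Gamma (μ + k * ν))
        = -c ^ ν * ((1 / Real.Gamma ν) * ∫ u in (0 : ℝ)..t, (t - u) ^ (ν - 1) * N u) := by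
  intro t ht
  have hμ : 0 < μ := lt_trans hν hμν
  have hβ : 0 < μ - ν := sub_pos.mpr hμν
  set a := c ^ ν with ha'
  set b := d ^ ν with hb'
  have ha : 0 < a := rpow_pos_of_pos hc ν
  have hb : 0 < b := rpow_pos_of_pos hd ν
  have hab : a ≠ b := by
    intro h
    rcases lt_trichotomy c d with h1 | h1 | h1
    · exact absurd h (ne_of_lt (Real.rpow_lt_rpow hc.le h1 hν))
    · exact hcd h1
    · exact absurd h.symm (ne_of_lt (Real.rpow_lt_rpow hd.le h1 hν))
  have hsub : a - b ≠ 0 := sub_ne_zero.mpr hab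
  set K := N₀ / (a - b) with hK
  have hGν : (0:ℝ) < Real.Gamma ν := Real.Gamma_pos_of_pos hν
  set w : ℕ → ℝ := fun k => (-b) ^ k - (-a) ^ k with hw
  set G : ℕ → ℝ → ℝ := fun k u =>
    (K * w k / Real.Gamma ((μ-ν) + k*ν)) * (u ^ ((μ-ν) + k*ν - 1) * (t-u) ^ (ν-1)) with hG
  -- power helper
  have hupow : ∀ {u : ℝ}, 0 < u → ∀ k : ℕ, (u ^ ν) ^ k = u ^ ((k:ℝ) * ν) := by
    intro u hu k
    rw [← Real.rpow_natCast (u ^ ν) k, ← Real.rpow_mul hu.le]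
    ring_nf
  -- pointwise series expansion on Ioc 0 t
  have hpt : ∀ u ∈ Ioc (0:ℝ) t, (t-u) ^ (ν-1) * N u = ∑' k, G k u := by
    intro u hu
    have hu0 : 0 < u := hu.1
    have hNu := hN u hu0
    have hmon : ∀ x : ℝ, ∀ k : ℕ, (-(x * u ^ ν)) ^ k = (-x) ^ k * u ^ ((k:ℝ) * ν) := by
      intro x k
      rw [show -(x * u ^ ν) = (-x) * u ^ ν from by ring, mul_pow, hupow hu0]
    have hsb : Summable (fun k : ℕ => (-b) ^ k * u ^ ((k:ℝ)*ν) / Real.Gamma ((μ-ν) + k*ν)) := by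
      apply (aux_summable hβ hν (-(b * u ^ ν))).congr
      intro k; rw [hmon]
    have hsa : Summable (fun k : ℕ => (-a) ^ k * u ^ ((k:ℝ)*ν) / Real.Gamma ((μ-ν) + k*ν)) := by
      apply (aux_summable hβ hν (-(a * u ^ ν))).congr
      intro k; rw [hmon]
    have h1 : (∑' k : ℕ, (-(b * u ^ ν)) ^ k / Real.Gamma ((μ-ν) + k*ν))
        = ∑' k : ℕ, (-b) ^ k * u ^ ((k:ℝ)*ν) / Real.Gamma ((μ-ν) + k*ν) :=
      tsum_congr fun k => by rw [hmon]
    have h2 : (∑' k : ℕ, (-(a * u ^ ν)) ^ k / Real.Gamma ((μ-ν) + k*ν))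
        = ∑' k : ℕ, (-a) ^ k * u ^ ((k:ℝ)*ν) / Real.Gamma ((μ-ν) + k*ν) :=
      tsum_congr fun k => by rw [hmon]
    rw [hNu, h1, h2, ← Summable.tsum_sub hsb hsa]
    have hGk : ∀ k : ℕ, G k u = ((t-u) ^ (ν-1) * (N₀ * u ^ (μ-ν-1) / (a-b)))
        * ((-b) ^ k * u ^ ((k:ℝ)*ν) / Real.Gamma ((μ-ν)+k*ν)
           - (-a) ^ k * u ^ ((k:ℝ)*ν) / Real.Gamma ((μ-ν)+k*ν)) := by
      intro k
      have he : (μ-ν) + (k:ℝ)*ν - 1 = (μ-ν-1) + (k:ℝ)*ν := by ring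
      simp only [hG, hw, hK]
      rw [he, Real.rpow_add hu0]
      field_simp
    rw [tsum_congr hGk, tsum_mul_left]
    ring
  -- integrability of each term
  have hIk : ∀ k : ℕ, (0:ℝ) < (μ-ν) + k*ν := fun k => by positivity
  have hInt : ∀ k : ℕ, IntegrableOn (fun u => u ^ ((μ-ν)+k*ν-1) * (t-u) ^ (ν-1)) (Ioc 0 t) := by
    intro k
    exact (intervalIntegrable_iff_integrableOn_Ioc_of_le ht.le).mp (aux_intable (hIk k) hν ht)
  have hG_int : ∀ k : ℕ, Integrable (G k) (volume.restrict (Ioc 0 t)) := by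
    intro k
    exact (hInt k).const_mul _
  -- value of each integral
  have hIval : ∀ k : ℕ, (∫ u in Ioc (0:ℝ) t, u ^ ((μ-ν)+k*ν-1) * (t-u) ^ (ν-1))
      = Real.Gamma ((μ-ν)+k*ν) * Real.Gamma ν / Real.Gamma (μ+k*ν) * t ^ (μ+k*ν-1) := by
    intro k
    rw [← intervalIntegral.integral_of_le ht.le]
    have := aux_beta (hIk k) hν ht
    rw [show (μ-ν) + (k:ℝ)*ν + ν = μ + (k:ℝ)*ν from by ring] at this
    exact this
  -- norms
  have hGpos := fun k => aux_gamma_pos hβ hν.le k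
  have hnormval : ∀ k : ℕ, (∫ u in Ioc (0:ℝ) t, ‖G k u‖)
      = |K * w k| / Real.Gamma ((μ-ν)+k*ν)
        * (Real.Gamma ((μ-ν)+k*ν) * Real.Gamma ν / Real.Gamma (μ+k*ν) * t ^ (μ+k*ν-1)) := by
    intro k
    have h1 : ∀ u ∈ Ioc (0:ℝ) t, ‖G k u‖
        = |K * w k| / Real.Gamma ((μ-ν)+k*ν) * (u ^ ((μ-ν)+k*ν-1) * (t-u) ^ (ν-1)) := by
      intro u hu
      have h2 : (0:ℝ) ≤ u ^ ((μ-ν)+k*ν-1) * (t-u) ^ (ν-1) :=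
        mul_nonneg (rpow_nonneg hu.1.le _) (rpow_nonneg (by linarith [hu.2]) _)
      simp only [hG]
      rw [Real.norm_eq_abs, abs_mul, abs_div, abs_of_pos (hGpos k), abs_of_nonneg h2]
    rw [setIntegral_congr_fun measurableSet_Ioc h1, MeasureTheory.integral_const_mul, hIval k]
  have hsum_norm : Summable (fun k : ℕ => ∫ u in Ioc (0:ℝ) t, ‖G k u‖) := by
    have hcl : Summable (fun k : ℕ => |K * w k| / Real.Gamma ((μ-ν)+k*ν)
        * (Real.Gamma ((μ-ν)+k*ν) * Real.Gamma ν / Real.Gamma (μ+k*ν) * t ^ (μ+k*ν-1))) := by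
      have hmaj : Summable (fun k : ℕ => |K| * Real.Gamma ν * t ^ (μ-1)
          * ((b*t^ν) ^ k / Real.Gamma (μ+k*ν) + (a*t^ν) ^ k / Real.Gamma (μ+k*ν))) :=
        ((aux_summable hμ hν (b*t^ν)).add (aux_summable hμ hν (a*t^ν))).mul_left _
      apply Summable.of_nonneg_of_le _ _ hmaj
      · intro k
        have := (hGpos k).le
        have := (aux_gamma_pos hμ hν.le k).le
        positivity
      · intro k
        have he : t ^ (μ + (k:ℝ)*ν - 1) = t ^ (μ-1) * (t^ν) ^ k := by
          rw [hupow ht k, ← Real.rpow_add ht]; ring_nf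
        have hwb : |w k| ≤ b ^ k + a ^ k := by
          simp only [hw]
          calc |(-b)^k - (-a)^k| ≤ |(-b)^k| + |(-a)^k| := abs_sub _ _
          _ = b ^ k + a ^ k := by
              simp [abs_pow, abs_of_pos hb, abs_of_pos ha]
        have hterm : |K * w k| / Real.Gamma ((μ-ν)+k*ν)
            * (Real.Gamma ((μ-ν)+k*ν) * Real.Gamma ν / Real.Gamma (μ+k*ν) * t ^ (μ+k*ν-1))
            = |K| * Real.Gamma ν * t ^ (μ-1) * ((t^ν)^k / Real.Gamma (μ+k*ν)) * |w k| := by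
          rw [abs_mul, he]
          field_simp
        have hmaj' : |K| * Real.Gamma ν * t ^ (μ-1)
            * ((b*t^ν) ^ k / Real.Gamma (μ+k*ν) + (a*t^ν) ^ k / Real.Gamma (μ+k*ν))
            = |K| * Real.Gamma ν * t ^ (μ-1) * ((t^ν)^k / Real.Gamma (μ+k*ν)) * (b^k + a^k) := by
          rw [mul_pow, mul_pow]
          field_simp
        rw [hterm, hmaj']
        apply mul_le_mul_of_nonneg_left hwb
        have := (aux_gamma_pos hμ hν.le k).le
        positivity
    exact hcl.congr fun k => (hnormval k).symm
  -- interchange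
  have hinterchange : (∫ u in Ioc (0:ℝ) t, (t-u) ^ (ν-1) * N u)
      = ∑' k : ℕ, ∫ u in Ioc (0:ℝ) t, G k u := by
    rw [setIntegral_congr_fun measurableSet_Ioc hpt]
    exact (integral_tsum_of_summable_integral_norm hG_int hsum_norm).symm
  -- value of each term integral
  have hGval : ∀ k : ℕ, (∫ u in Ioc (0:ℝ) t, G k u)
      = Real.Gamma ν * (K * t ^ (μ-1)
        * ((-(b*t^ν)) ^ k / Real.Gamma (μ+k*ν) - (-(a*t^ν)) ^ k / Real.Gamma (μ+k*ν))) := by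
    intro k
    simp only [hG]
    rw [MeasureTheory.integral_const_mul, hIval k]
    have he : t ^ (μ + (k:ℝ)*ν - 1) = t ^ (μ-1) * (t^ν) ^ k := by
      rw [hupow ht k, ← Real.rpow_add ht]; ring_nf
    have hmon : ∀ x : ℝ, (-(x * t ^ ν)) ^ k = (-x) ^ k * (t ^ ν) ^ k := by
      intro x
      rw [show -(x * t ^ ν) = (-x) * t ^ ν from by ring, mul_pow]
    rw [he, hmon, hmon]
    simp only [hw]
    field_simp
  -- total integral value
  have hEb := aux_summable hμ hν (-(b*t^ν))
  have hEa := aux_summable hμ hν (-(a*t^ν))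
  have htot : (∫ u in (0:ℝ)..t, (t-u) ^ (ν-1) * N u)
      = Real.Gamma ν * (K * t ^ (μ-1)
        * ((∑' k : ℕ, (-(b*t^ν)) ^ k / Real.Gamma (μ+k*ν))
          - ∑' k : ℕ, (-(a*t^ν)) ^ k / Real.Gamma (μ+k*ν))) := by
    rw [intervalIntegral.integral_of_le ht.le, hinterchange, tsum_congr hGval,
      tsum_mul_left, tsum_mul_left, Summable.tsum_sub hEb hEa]
  have hts : t ^ (μ-ν-1) * t ^ ν = t ^ (μ-1) := by
    rw [← Real.rpow_add ht]; ring_nf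
  rw [hN t ht, htot, hK, aux_shift hν hβ (-(b*t^ν)), aux_shift hν hβ (-(a*t^ν)), ← hts]
  field_simp [hsub, hGν.ne', (Real.Gamma_pos_of_pos hβ).ne']
  ring
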